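/- Suppose q, p : ℝ → ℝ are differentiable, a₂ ∈ ℝ, p(t) ≠ 0 for all t, and (q, p) satisfy the Hamiltonian system for H_IV(q,p,t,a₁,a₂) = qp(p − q − t) − a₁p − a₂q, namely q' = ∂H/∂p = 2qp − q² − qt − a₁ and p' = −∂H/∂q = −p² + 2qp + tp + a₂. Then Q = q + a₂/p and P = p satisfy the Hamiltonian system for H_IV(Q,P,t,a₁+a₂,−a₂): Q' = 2QP − Q² − Qt − (a₁+a₂) and P' = −P² + 2QP + tP − a₂. -/

import Mathlib

/-- The Bäcklund transformation `s₂ : (q,p) ↦ (q + a₂/p, p)`, `(a₁,a₂) ↦ (a₁+a₂, −a₂)`, maps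
solutions of the Hamiltonian system of P_IV(a₁, a₂) to solutions of the Hamiltonian system
of P_IV(a₁+a₂, −a₂). -/
theorem stmt15 (a₁ a₂ : ℝ) (q p : ℝ → ℝ)
    (hq : Differentiable ℝ q) (hp : Differentiable ℝ p)
    (hp0 : ∀ t, p t ≠ 0)
    (h1 : ∀ t, deriv q t = 2 * q t * p t - q t ^ 2 - q t * t - a₁)
    (h2 : ∀ t, deriv p t = -p t ^ 2 + 2 * q t * p t + t * p t + a₂) :
    (∀ t, deriv (fun s => q s + a₂ / p s) t
        = 2 * (q t + a₂ / p t) * p t - (q t + a₂ / p t) ^ 2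
          - (q t + a₂ / p t) * t - (a₁ + a₂)) ∧
    (∀ t, deriv p t = -p t ^ 2 + 2 * (q t + a₂ / p t) * p t + t * p t - a₂) := by
  constructor
  · intro t
    have hd : deriv (fun s => q s + a₂ / p s) t
        = deriv q t + (-(a₂ * deriv p t) / p t ^ 2) := by
      rw [deriv_fun_add (hq t)
        (show DifferentiableAt ℝ (fun s => a₂ / p s) t from ((differentiable_const a₂).div hp hp0) t)]
      congr 1
      rw [deriv_fun_div (differentiableAt_const a₂) (hp t) (hp0 t)]
      simp
    rw [hd, h1 t, h2 t]
    field_simp [hp0 t]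
    ring
  · intro t
    rw [h2 t]
    field_simp [hp0 t]
    ring
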